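/- Given an adjunction F ⊣ G with counit ε and unit η, and a natural isomorphism β : G ∘ E ≅ E' ∘ G between composites of endofunctors E on the domain of G and E' on its codomain, the induced functor G̃ : E-Coalg → E'-Coalg, (W,ξ) ↦ (G(W), β_W ∘ G(ξ)), has a left adjoint F̂ : E'-Coalg → E-Coalg given on objects by (W, ζ) ↦ (F(W), ε_{EF(W)} ∘ F(β⁻¹_{F(W)}) ∘ F E'(η_W) ∘ F(ζ)). -/

import Mathlib

/-!
Given an adjunction `F ⊣ G` with counit `ε` and unit `η`, and a natural isomorphism
`β : G ∘ E ≅ E' ∘ G` between composites of endofunctors `E` on the domain of `G` and `E'` on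
its codomain, the induced functor `G̃ : E-Coalg ⥤ E'-Coalg`, `(W, ξ) ↦ (G W, β_W ∘ G ξ)`,
has a left adjoint `F̂ : E'-Coalg ⥤ E-Coalg` given on objects by
`(W, ζ) ↦ (F W, ε_{EF(W)} ∘ F(β⁻¹_{F W}) ∘ F E'(η_W) ∘ F ζ)`.
-/

universe v₁ v₂ u₁ u₂

open CategoryTheory CategoryTheory.Limits

variable {C : Type u₁} [Category.{v₁} C] {D : Type u₂} [Category.{v₂} D]
variable {F : D ⥤ C} {G : C ⥤ D}

/-- The induced functor `G̃ : E-Coalg ⥤ E'-Coalg`, `(W, ξ) ↦ (G W, β_W ∘ G ξ)`. -/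
def coalgebraPushforward (G : C ⥤ D) (E : C ⥤ C) (E' : D ⥤ D) (β : E ⋙ G ≅ G ⋙ E') :
    Endofunctor.Coalgebra E ⥤ Endofunctor.Coalgebra E' where
  obj V := ⟨G.obj V.V, G.map V.str ≫ β.hom.app V.V⟩
  map {V₁ V₂} f :=
    { f := G.map f.f
      h := by
        have hn := β.hom.naturality f.f
        simp only [Functor.comp_map] at hn
        dsimp
        rw [Category.assoc, ← hn, ← Functor.map_comp_assoc, f.h, Functor.map_comp_assoc] }

/-- The left adjoint `F̂ : E'-Coalg ⥤ E-Coalg`,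
`(W, ζ) ↦ (F W, ε_{EF(W)} ∘ F(β⁻¹_{F W}) ∘ F E'(η_W) ∘ F ζ)`. -/
def coalgebraPullback (adj : F ⊣ G) (E : C ⥤ C) (E' : D ⥤ D) (β : E ⋙ G ≅ G ⋙ E') :
    Endofunctor.Coalgebra E' ⥤ Endofunctor.Coalgebra E where
  obj W := ⟨F.obj W.V,
    F.map W.str ≫ F.map (E'.map (adj.unit.app W.V)) ≫ F.map (β.inv.app (F.obj W.V)) ≫
      adj.counit.app (E.obj (F.obj W.V))⟩
  map {W₁ W₂} f :=
    { f := F.map f.f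
      h := by
        have hβ := β.inv.naturality (F.map f.f)
        simp only [Functor.comp_map] at hβ
        have hη := adj.unit.naturality f.f
        simp only [Functor.comp_map, Functor.id_map] at hη
        have hε := adj.counit.naturality (E.map (F.map f.f))
        simp only [Functor.comp_map, Functor.id_map] at hε
        dsimp
        simp only [Category.assoc]
        rw [← hε]
        simp only [← Functor.map_comp_assoc]
        congr 1
        congr 1
        rw [← hβ, ← E'.map_comp_assoc, ← hη, E'.map_comp_assoc, reassoc_of% f.h] }

theorem coalgebraPullback_left_adjoint_of_coalgebraPushforward
    (adj : F ⊣ G) (E : C ⥤ C) (E' : D ⥤ D) (β : E ⋙ G ≅ G ⋙ E') :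
    Nonempty (coalgebraPullback adj E E' β ⊣ coalgebraPushforward G E E' β) := by
  refine ⟨Adjunction.mkOfHomEquiv {
    homEquiv := fun W V => {
      toFun := fun f => ⟨adj.unit.app W.V ≫ G.map f.f, ?_⟩
      invFun := fun g => ⟨F.map g.f ≫ adj.counit.app V.V, ?_⟩
      left_inv := fun f => ?_
      right_inv := fun g => ?_ }
    homEquiv_naturality_left_symm := fun f g => ?_
    homEquiv_naturality_right := fun f g => ?_ }⟩
  · -- toFun is a coalgebra hom
    obtain ⟨ff, hff⟩ := f
    change F.obj W.V ⟶ V.V at ff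
    have hf := hff
    dsimp [coalgebraPullback] at hf
    have hb := β.inv.naturality ff
    dsimp [coalgebraPullback] at hb
    dsimp [coalgebraPullback, coalgebraPushforward]
    simp only [Category.assoc]
    rw [← G.map_comp_assoc ff V.str, ← hf]
    simp only [G.map_comp, Category.assoc, Adjunction.unit_naturality_assoc,
      Adjunction.right_triangle_components_assoc, E'.map_comp]
    rw [← reassoc_of% hb]
    simp
  · -- invFun is a coalgebra hom
    have hg := g.h
    dsimp [coalgebraPushforward] at hg
    have hb := β.inv.naturality (F.map g.f ≫ adj.counit.app V.V)
    dsimp [coalgebraPullback] at hb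
    have hu : adj.unit.app W.V ≫ G.map (F.map g.f ≫ adj.counit.app V.V) = g.f := by dsimp [coalgebraPushforward]; simp
    dsimp [coalgebraPullback, coalgebraPushforward]
    simp only [Category.assoc]
    erw [← adj.counit_naturality (E.map (F.map g.f ≫ adj.counit.app V.V)),
      ← adj.counit_naturality V.str]
    simp only [← F.map_comp_assoc]
    congr 2
    rw [← hb, ← E'.map_comp_assoc, hu, reassoc_of% hg]
    simp
  · ext
    dsimp [coalgebraPullback, coalgebraPushforward]
    simp
  · ext
    dsimp [coalgebraPullback, coalgebraPushforward]
    simp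
  · ext
    show F.map (f.f ≫ g.f) ≫ adj.counit.app _ = F.map f.f ≫ (F.map g.f ≫ adj.counit.app _)
    exact (congrArg (· ≫ _) (F.map_comp _ _)).trans (Category.assoc _ _ _)
  · ext
    show adj.unit.app _ ≫ G.map (f.f ≫ g.f) = (adj.unit.app _ ≫ G.map f.f) ≫ G.map g.f
    exact (congrArg (_ ≫ ·) (G.map_comp _ _)).trans (Category.assoc _ _ _).symm
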